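/- For A-games E over algebra A and F over algebra B, the expansion of the parallel composition is isomorphic to the parallel composition of the expansions: expn_{A||B}(E||F) ≅ expn_A(E) || expn_B(F), as event structures with polarity. -/

import Mathlib

/-- The order and consistency data of an event structure. -/
structure PreES (E : Type) where
  le : E → E → Prop
  con : Set E → Prop

namespace PreES

variable {E F : Type}

/-- A configuration: every finite subset is consistent, and it is down-closed. -/
def Config (P : PreES E) (x : Set E) : Prop :=
  (∀ X : Set E, X ⊆ x → X.Finite → P.con X) ∧
  (∀ e e' : E, P.le e' e → e ∈ x → e' ∈ x)

/-- `e` is enabled at the configuration `x`: `x ∪ {e}` is again a configuration. -/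
def Enabled (P : PreES E) (x : Set E) (e : E) : Prop :=
  e ∉ x ∧ P.Config (insert e x)

/-- Immediate causal dependency `e → e'` : `e ≠ e'`, `e ≤ e'` and nothing strictly between. -/
def Imm (P : PreES E) (e e' : E) : Prop :=
  e ≠ e' ∧ P.le e e' ∧ ∀ d, P.le e d → P.le d e' → d = e ∨ d = e'

/-- A total map of event structures: configurations map to configurations,
injectively on each configuration. -/
def IsMap (P : PreES E) (Q : PreES F) (f : E → F) : Prop :=
  (∀ x : Set E, P.Config x → Q.Config (f '' x)) ∧
  (∀ x : Set E, P.Config x → ∀ e₁ ∈ x, ∀ e₂ ∈ x, f e₁ = f e₂ → e₁ = e₂)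

end PreES

/-- An event structure. -/
structure ES (E : Type) extends PreES E where
  le_refl : ∀ e, le e e
  le_trans : ∀ a b c, le a b → le b c → le a c
  le_antisymm : ∀ a b, le a b → le b a → a = b
  causes_finite : ∀ e, {e' | le e' e}.Finite
  con_singleton : ∀ e, con {e}
  con_subset : ∀ X Y : Set E, Y ⊆ X → con X → con Y
  con_extend : ∀ (X : Set E) (e e' : E), con X → le e e' → e' ∈ X → con (insert e X)

/-- No-overlap: events carrying the same variable are never concurrent. -/
def NoOverlap {E V : Type} (P : PreES E) (var : E → V) : Prop :=
  ∀ e e', var e = var e' →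
    ¬(P.con {e, e'} ∧ ¬ P.le e e' ∧ ¬ P.le e' e)

/-- Race-freeness: enabled events of opposite polarities can occur jointly.
`true` is the polarity `+`, `false` is `−`. -/
def RaceFree {E : Type} (P : PreES E) (pol : E → Bool) : Prop :=
  ∀ x : Set E, P.Config x → ∀ e e', P.Enabled x e → P.Enabled x e' →
    pol e = true → pol e' = false → e ≠ e' → P.Config (insert e (insert e' x))

/-- An (ordinary) strategy: a total, polarity preserving map of event structures
which is receptive and innocent. -/
def IsStrategy {SE E : Type} (S : PreES SE) (G : PreES E)
    (polS : SE → Bool) (polG : E → Bool) (σ : SE → E) : Prop :=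
  PreES.IsMap S G σ ∧
  (∀ s, polG (σ s) = polS s) ∧
  (∀ x : Set SE, S.Config x → ∀ e, polG e = false → G.Enabled (σ '' x) e →
    ∃! s, S.Enabled x s ∧ σ s = e) ∧
  (∀ s s', S.Imm s s' → (polS s' = false ∨ polS s = true) → G.Imm (σ s) (σ s'))

/-- An `𝓐`-strategy on an `𝓐`-game: a total, polarity preserving map with an
instantiation function of matching sorts, receptive (for every element of
matching sort) and innocent. -/
def IsAStrategy {SE E A V Srt : Type} (S : PreES SE) (G : PreES E)
    (polS : SE → Bool) (polG : E → Bool) (var : E → V)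
    (sortA : A → Srt) (sortV : V → Srt)
    (σ : SE → E) (inst : SE → A) : Prop :=
  PreES.IsMap S G σ ∧
  (∀ s, polG (σ s) = polS s) ∧
  (∀ s, sortA (inst s) = sortV (var (σ s))) ∧
  (∀ x : Set SE, S.Config x → ∀ e, polG e = false → G.Enabled (σ '' x) e →
    ∀ a, sortA a = sortV (var e) →
      ∃! s, S.Enabled x s ∧ σ s = e ∧ inst s = a) ∧
  (∀ s s', S.Imm s s' → (polS s' = false ∨ polS s = true) → G.Imm (σ s) (σ s'))

/-- An event of the `𝓐`-expansion: an event `e` together with a sort-respecting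
instantiation of its down-closure `[e]` (encoded as an `Option`-valued function
whose domain is exactly `[e]`). -/
structure ExEvent {E A V Srt : Type} (P : PreES E) (var : E → V)
    (sortA : A → Srt) (sortV : V → Srt) where
  ev : E
  inst : E → Option A
  dom : ∀ e', (inst e').isSome ↔ P.le e' ev
  srt : ∀ e' a, inst e' = some a → sortA a = sortV (var e')

/-- The `𝓐`-expansion of a game, as order and consistency data. -/
def expn {E A V Srt : Type} (P : PreES E) (var : E → V)
    (sortA : A → Srt) (sortV : V → Srt) : PreES (ExEvent P var sortA sortV) where
  le p q := P.le p.ev q.ev ∧ ∀ e', P.le e' p.ev → q.inst e' = p.inst e'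
  con X := P.con (ExEvent.ev '' X) ∧ ∀ p ∈ X, ∀ q ∈ X, p.ev = q.ev → p = q

/-- The projection `red : expn(E) → E`. -/
def red {E A V Srt : Type} {P : PreES E} {var : E → V}
    {sortA : A → Srt} {sortV : V → Srt} (p : ExEvent P var sortA sortV) : E := p.ev

/-- The instantiation `Inst(e,ε) = ε(e)` (needs reflexivity of the order). -/
def ExEvent.Inst {E A V Srt : Type} {P : PreES E} {var : E → V}
    {sortA : A → Srt} {sortV : V → Srt} (href : ∀ e, P.le e e)
    (p : ExEvent P var sortA sortV) : A :=
  (p.inst p.ev).get ((p.dom p.ev).mpr (href p.ev))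

/-- Parallel composition of the order/consistency data of two event structures. -/
def parPre {E F : Type} (P : PreES E) (Q : PreES F) : PreES (E ⊕ F) where
  le x y :=
    match x, y with
    | .inl a, .inl b => P.le a b
    | .inr a, .inr b => Q.le a b
    | _, _ => False
  con X := P.con {a | Sum.inl a ∈ X} ∧ Q.con {b | Sum.inr b ∈ X}

/-- Restriction of the data of an event structure to a subset of events. -/
def subPre {E : Type} (P : PreES E) (p : E → Prop) : PreES {e : E // p e} where
  le a b := P.le a.1 b.1
  con X := P.con (Subtype.val '' X)

namespace ExpnPar

theorem ExEvent.ext' {E A V Srt : Type} {P : PreES E} {var : E → V}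
    {sortA : A → Srt} {sortV : V → Srt} {p q : ExEvent P var sortA sortV}
    (h1 : p.ev = q.ev) (h2 : p.inst = q.inst) : p = q := by
  cases p; cases q; cases h1; cases h2; rfl

variable {GE GF A B VA VB SA SB : Type}
  {PE : PreES GE} {PF : PreES GF}
  {varE : GE → VA} {varF : GF → VB}
  {sortA : A → SA} {sortB : B → SB} {sortVA : VA → SA} {sortVB : VB → SB}

/-- Inject an event of `expn E` into `expn (E ‖ F)`. -/
def mkL (q : ExEvent PE varE sortA sortVA) :
    ExEvent (parPre PE PF) (Sum.map varE varF) (Sum.map sortA sortB)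
      (Sum.map sortVA sortVB) where
  ev := Sum.inl q.ev
  inst := Sum.elim (fun d => (q.inst d).map Sum.inl) (fun _ => none)
  dom e' := by
    cases e' with
    | inl d => simpa [parPre] using q.dom d
    | inr f => simp [parPre]
  srt e' c hc := by
    cases e' with
    | inl d =>
      simp only [Sum.elim_inl, Option.map_eq_some_iff] at hc
      obtain ⟨a, ha, rfl⟩ := hc
      simp [Sum.map, q.srt d a ha]
    | inr f => simp at hc

def mkR (q : ExEvent PF varF sortB sortVB) :
    ExEvent (parPre PE PF) (Sum.map varE varF) (Sum.map sortA sortB)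
      (Sum.map sortVA sortVB) where
  ev := Sum.inr q.ev
  inst := Sum.elim (fun _ => none) (fun d => (q.inst d).map Sum.inr)
  dom e' := by
    cases e' with
    | inl d => simp [parPre]
    | inr f => simpa [parPre] using q.dom f
  srt e' c hc := by
    cases e' with
    | inl d => simp at hc
    | inr f =>
      simp only [Sum.elim_inr, Option.map_eq_some_iff] at hc
      obtain ⟨a, ha, rfl⟩ := hc
      simp [Sum.map, q.srt f a ha]

def exL (p : ExEvent (parPre PE PF) (Sum.map varE varF) (Sum.map sortA sortB)
      (Sum.map sortVA sortVB)) (e : GE) (h : p.ev = Sum.inl e) :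
    ExEvent PE varE sortA sortVA where
  ev := e
  inst d := (p.inst (Sum.inl d)).bind Sum.getLeft?
  dom d := by
    constructor
    · intro hs
      rcases hpc : p.inst (Sum.inl d) with _ | c
      · simp [hpc] at hs
      · have h2 := (p.dom (Sum.inl d)).mp (by simp [hpc])
        rw [h] at h2
        exact h2
    · intro hd
      have hle : (parPre PE PF).le (Sum.inl d) p.ev := by rw [h]; exact hd
      have hs := (p.dom _).mpr hle
      rcases Option.isSome_iff_exists.mp hs with ⟨c, hc⟩
      have hsrt := p.srt _ c hc
      cases c with
      | inl a => simp [hc]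
      | inr b => simp [Sum.map] at hsrt
  srt d a ha := by
    rcases Option.bind_eq_some_iff.mp ha with ⟨c, hc, hgl⟩
    cases c with
    | inr b => simp at hgl
    | inl a' =>
      simp only [Sum.getLeft?, Option.some.injEq] at hgl
      subst hgl
      have h2 := p.srt _ _ hc
      simpa [Sum.map] using h2

def exR (p : ExEvent (parPre PE PF) (Sum.map varE varF) (Sum.map sortA sortB)
      (Sum.map sortVA sortVB)) (f : GF) (h : p.ev = Sum.inr f) :
    ExEvent PF varF sortB sortVB where
  ev := f
  inst d := (p.inst (Sum.inr d)).bind Sum.getRight?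
  dom d := by
    constructor
    · intro hs
      rcases hpc : p.inst (Sum.inr d) with _ | c
      · simp [hpc] at hs
      · have h2 := (p.dom (Sum.inr d)).mp (by simp [hpc])
        rw [h] at h2
        exact h2
    · intro hd
      have hle : (parPre PE PF).le (Sum.inr d) p.ev := by rw [h]; exact hd
      have hs := (p.dom _).mpr hle
      rcases Option.isSome_iff_exists.mp hs with ⟨c, hc⟩
      have hsrt := p.srt _ c hc
      cases c with
      | inr a => simp [hc]
      | inl b => simp [Sum.map] at hsrt
  srt d a ha := by
    rcases Option.bind_eq_some_iff.mp ha with ⟨c, hc, hgl⟩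
    cases c with
    | inl b => simp at hgl
    | inr a' =>
      simp only [Sum.getRight?, Option.some.injEq] at hgl
      subst hgl
      have h2 := p.srt _ _ hc
      simpa [Sum.map] using h2

def split (p : ExEvent (parPre PE PF) (Sum.map varE varF) (Sum.map sortA sortB)
      (Sum.map sortVA sortVB)) :
    ExEvent PE varE sortA sortVA ⊕ ExEvent PF varF sortB sortVB :=
  match h : p.ev with
  | .inl e => .inl (exL p e h)
  | .inr f => .inr (exR p f h)

theorem split_mkL (q : ExEvent PE varE sortA sortVA) :
    split (mkL (PF := PF) (varF := varF) (sortB := sortB) (sortVB := sortVB) q)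
      = Sum.inl q := by
  show Sum.inl (exL (mkL q) q.ev rfl) = Sum.inl q
  congr 1
  refine ExEvent.ext' rfl ?_
  funext d
  show ((q.inst d).map Sum.inl).bind Sum.getLeft? = q.inst d
  cases hq : q.inst d <;> simp [hq, Sum.getLeft?]

theorem split_mkR (q : ExEvent PF varF sortB sortVB) :
    split (mkR (PE := PE) (varE := varE) (sortA := sortA) (sortVA := sortVA) q)
      = Sum.inr q := by
  show Sum.inr (exR (mkR q) q.ev rfl) = Sum.inr q
  congr 1
  refine ExEvent.ext' rfl ?_
  funext d
  show ((q.inst d).map Sum.inr).bind Sum.getRight? = q.inst d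
  cases hq : q.inst d <;> simp [hq, Sum.getRight?]

theorem elim_split (p : ExEvent (parPre PE PF) (Sum.map varE varF)
      (Sum.map sortA sortB) (Sum.map sortVA sortVB)) :
    Sum.elim mkL mkR (split p) = p := by
  unfold split
  split
  case _ e heq =>
    apply ExEvent.ext' heq.symm
    funext d
    cases d with
    | inl d =>
      show ((p.inst (Sum.inl d)).bind Sum.getLeft?).map Sum.inl = p.inst (Sum.inl d)
      rcases hc : p.inst (Sum.inl d) with _ | c
      · rfl
      · have hsrt := p.srt _ _ hc
        cases c with
        | inl a => rfl
        | inr b => simp [Sum.map] at hsrt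
    | inr f =>
      show none = p.inst (Sum.inr f)
      have hns : ¬ (p.inst (Sum.inr f)).isSome := by
        rw [p.dom, heq]
        simp [parPre]
      symm
      exact Option.not_isSome_iff_eq_none.mp hns
  case _ f heq =>
    apply ExEvent.ext' heq.symm
    funext d
    cases d with
    | inr d =>
      show ((p.inst (Sum.inr d)).bind Sum.getRight?).map Sum.inr = p.inst (Sum.inr d)
      rcases hc : p.inst (Sum.inr d) with _ | c
      · rfl
      · have hsrt := p.srt _ _ hc
        cases c with
        | inr a => rfl
        | inl b => simp [Sum.map] at hsrt
    | inl e =>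
      show none = p.inst (Sum.inl e)
      have hns : ¬ (p.inst (Sum.inl e)).isSome := by
        rw [p.dom, heq]
        simp [parPre]
      symm
      exact Option.not_isSome_iff_eq_none.mp hns

theorem split_eq_inl {p} {u : ExEvent PE varE sortA sortVA}
    (h : split (PF := PF) (varF := varF) (sortB := sortB) (sortVB := sortVB) p
      = Sum.inl u) : p = mkL u := by
  have h2 := elim_split p
  rw [h] at h2
  exact h2.symm

theorem split_eq_inr {p} {u : ExEvent PF varF sortB sortVB}
    (h : split (PE := PE) (varE := varE) (sortA := sortA) (sortVA := sortVA) p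
      = Sum.inr u) : p = mkR u := by
  have h2 := elim_split p
  rw [h] at h2
  exact h2.symm

theorem ev_split (p : ExEvent (parPre PE PF) (Sum.map varE varF)
      (Sum.map sortA sortB) (Sum.map sortVA sortVB)) :
    p.ev = Sum.elim (fun u => Sum.inl u.ev) (fun u => Sum.inr u.ev) (split p) := by
  unfold split
  split
  case _ e heq => exact heq
  case _ f heq => exact heq

theorem le_split (p q : ExEvent (parPre PE PF) (Sum.map varE varF)
      (Sum.map sortA sortB) (Sum.map sortVA sortVB)) :
    (expn (parPre PE PF) (Sum.map varE varF) (Sum.map sortA sortB)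
      (Sum.map sortVA sortVB)).le p q ↔
    (parPre (expn PE varE sortA sortVA) (expn PF varF sortB sortVB)).le
      (split p) (split q) := by
  rcases hp : split p with u | u <;> rcases hq : split q with v | v
  · -- LL
    rw [split_eq_inl hp, split_eq_inl hq]
    constructor
    · rintro ⟨h1, h2⟩
      refine ⟨h1, fun d hd => ?_⟩
      have h3 : (v.inst d).map Sum.inl = (u.inst d).map Sum.inl :=
        h2 (Sum.inl d) hd
      exact Option.map_injective Sum.inl_injective h3
    · rintro ⟨h1, h2⟩
      refine ⟨h1, ?_⟩
      rintro (d | f) hd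
      · show (v.inst d).map Sum.inl = (u.inst d).map Sum.inl
        rw [h2 d hd]
      · exact hd.elim
  · -- LR
    rw [split_eq_inl hp, split_eq_inr hq]
    constructor
    · rintro ⟨h1, -⟩; exact h1.elim
    · intro h; exact h.elim
  · -- RL
    rw [split_eq_inr hp, split_eq_inl hq]
    constructor
    · rintro ⟨h1, -⟩; exact h1.elim
    · intro h; exact h.elim
  · -- RR
    rw [split_eq_inr hp, split_eq_inr hq]
    constructor
    · rintro ⟨h1, h2⟩
      refine ⟨h1, fun d hd => ?_⟩
      have h3 : (v.inst d).map Sum.inr = (u.inst d).map Sum.inr :=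
        h2 (Sum.inr d) hd
      exact Option.map_injective Sum.inr_injective h3
    · rintro ⟨h1, h2⟩
      refine ⟨h1, ?_⟩
      rintro (e | d) hd
      · exact hd.elim
      · show (v.inst d).map Sum.inr = (u.inst d).map Sum.inr
        rw [h2 d hd]

theorem setL (Z : Set (ExEvent (parPre PE PF) (Sum.map varE varF)
      (Sum.map sortA sortB) (Sum.map sortVA sortVB))) :
    {a | Sum.inl a ∈ ExEvent.ev '' Z} =
      ExEvent.ev '' {u | Sum.inl u ∈ split '' Z} := by
  ext a
  constructor
  · rintro ⟨p, hpZ, hpe⟩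
    rcases hs : split p with u | u
    · have h := ev_split p
      rw [hpe, hs] at h
      simp only [Sum.elim_inl, Sum.inl.injEq] at h
      exact ⟨u, ⟨p, hpZ, hs⟩, h.symm⟩
    · have h := ev_split p
      rw [hpe, hs] at h
      simp at h
  · rintro ⟨u, ⟨p, hpZ, hs⟩, hue⟩
    have h := ev_split p
    rw [hs] at h
    exact ⟨p, hpZ, by rw [h]; simp [hue]⟩

theorem setR (Z : Set (ExEvent (parPre PE PF) (Sum.map varE varF)
      (Sum.map sortA sortB) (Sum.map sortVA sortVB))) :
    {b | Sum.inr b ∈ ExEvent.ev '' Z} =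
      ExEvent.ev '' {u | Sum.inr u ∈ split '' Z} := by
  ext b
  constructor
  · rintro ⟨p, hpZ, hpe⟩
    rcases hs : split p with u | u
    · have h := ev_split p
      rw [hpe, hs] at h
      simp at h
    · have h := ev_split p
      rw [hpe, hs] at h
      simp only [Sum.elim_inr, Sum.inr.injEq] at h
      exact ⟨u, ⟨p, hpZ, hs⟩, h.symm⟩
  · rintro ⟨u, ⟨p, hpZ, hs⟩, hue⟩
    have h := ev_split p
    rw [hs] at h
    exact ⟨p, hpZ, by rw [h]; simp [hue]⟩

theorem con_split (Z : Set (ExEvent (parPre PE PF) (Sum.map varE varF)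
      (Sum.map sortA sortB) (Sum.map sortVA sortVB))) :
    (expn (parPre PE PF) (Sum.map varE varF) (Sum.map sortA sortB)
      (Sum.map sortVA sortVB)).con Z ↔
    (parPre (expn PE varE sortA sortVA) (expn PF varF sortB sortVB)).con
      (split '' Z) := by
  constructor
  · rintro ⟨⟨hE, hF⟩, hinj⟩
    refine ⟨⟨?_, ?_⟩, ?_, ?_⟩
    · rw [← setL]; exact hE
    · intro u hu v hv huv
      rcases hu with ⟨p, hpZ, hp⟩
      rcases hv with ⟨q, hqZ, hq⟩
      have hpq : p = q := by
        apply hinj p hpZ q hqZ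
        rw [ev_split p, ev_split q, hp, hq]
        simp [huv]
      subst hpq
      rw [hp] at hq
      exact Sum.inl.inj hq
    · rw [← setR]; exact hF
    · intro u hu v hv huv
      rcases hu with ⟨p, hpZ, hp⟩
      rcases hv with ⟨q, hqZ, hq⟩
      have hpq : p = q := by
        apply hinj p hpZ q hqZ
        rw [ev_split p, ev_split q, hp, hq]
        simp [huv]
      subst hpq
      rw [hp] at hq
      exact Sum.inr.inj hq
  · rintro ⟨⟨hE, hinjL⟩, hF, hinjR⟩
    refine ⟨⟨?_, ?_⟩, ?_⟩
    · rw [setL]; exact hE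
    · rw [setR]; exact hF
    · intro p hp q hq hpq
      rcases hsp : split p with u | u <;> rcases hsq : split q with v | v
      · rw [split_eq_inl hsp, split_eq_inl hsq]
        have he : (Sum.inl u.ev : GE ⊕ GF) = Sum.inl v.ev := by
          rw [split_eq_inl hsp, split_eq_inl hsq] at hpq
          exact hpq
        have huv : u = v :=
          hinjL u ⟨p, hp, hsp⟩ v ⟨q, hq, hsq⟩ (Sum.inl.inj he)
        rw [huv]
      · exfalso
        have he : (Sum.inl u.ev : GE ⊕ GF) = Sum.inr v.ev := by
          rw [split_eq_inl hsp, split_eq_inr hsq] at hpq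
          exact hpq
        exact absurd he Sum.inl_ne_inr
      · exfalso
        have he : (Sum.inr u.ev : GE ⊕ GF) = Sum.inl v.ev := by
          rw [split_eq_inr hsp, split_eq_inl hsq] at hpq
          exact hpq
        exact absurd he.symm Sum.inl_ne_inr
      · rw [split_eq_inr hsp, split_eq_inr hsq]
        have he : (Sum.inr u.ev : GE ⊕ GF) = Sum.inr v.ev := by
          rw [split_eq_inr hsp, split_eq_inr hsq] at hpq
          exact hpq
        have huv : u = v :=
          hinjR u ⟨p, hp, hsp⟩ v ⟨q, hq, hsq⟩ (Sum.inr.inj he)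
        rw [huv]

end ExpnPar
/-- the expansion of a parallel composition of games is isomorphic
(as an event structure with polarity) to the parallel composition of the
expansions: `expn_{𝓐‖𝓑}(E‖F) ≅ expn_𝓐(E) ‖ expn_𝓑(F)`. -/
theorem expn_par_iso {GE GF A B VA VB SA SB : Type}
    (PE : ES GE) (PF : ES GF) (polE : GE → Bool) (polF : GF → Bool)
    (varE : GE → VA) (varF : GF → VB)
    (sortA : A → SA) (sortB : B → SB) (sortVA : VA → SA) (sortVB : VB → SB) :
    let X := expn (parPre PE.toPreES PF.toPreES) (Sum.map varE varF)
      (Sum.map sortA sortB) (Sum.map sortVA sortVB)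
    let Y := parPre (expn PE.toPreES varE sortA sortVA)
      (expn PF.toPreES varF sortB sortVB)
    ∃ φ : ExEvent (parPre PE.toPreES PF.toPreES) (Sum.map varE varF)
            (Sum.map sortA sortB) (Sum.map sortVA sortVB) ≃
          (ExEvent PE.toPreES varE sortA sortVA ⊕ ExEvent PF.toPreES varF sortB sortVB),
      (∀ p q, X.le p q ↔ Y.le (φ p) (φ q)) ∧
      (∀ Z, X.con Z ↔ Y.con (φ '' Z)) ∧
      (∀ p, Sum.elim polE polF p.ev =
        Sum.elim (fun q => polE q.ev) (fun q => polF q.ev) (φ p)) := by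
  intro X Y
  refine ⟨⟨ExpnPar.split, Sum.elim ExpnPar.mkL ExpnPar.mkR, ExpnPar.elim_split, ?_⟩,
    ?_, ?_, ?_⟩
  · rintro (q | q)
    · exact ExpnPar.split_mkL q
    · exact ExpnPar.split_mkR q
  · intro p q
    exact ExpnPar.le_split p q
  · intro Z
    exact ExpnPar.con_split Z
  · intro p
    simp only [Equiv.coe_fn_mk]
    rcases hs : ExpnPar.split p with u | u <;>
      simp [ExpnPar.ev_split p, hs]
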